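/- Let α be irrational with convergents p_n/q_n and z_n = q_nα − p_n, let n be even, and on ℝ/ℤ set I_n = [0, |z_n| + |z_{n+1}|) and I_n^0 = [0, |z_{n+1}|). For x ∈ I_n define the first forward return time r_n^+(x) = min{j ∈ ℤ₊ : x + jα (mod 1) ∈ I_n}. Then r_n^+(x) = q_n if x ∈ I_n^0, and r_n^+(x) = q_{n+1} if x ∈ I_n \ I_n^0. -/

import Mathlib

/-- Gauss map iterates of `α`: `x₀ = {α}`, `x_{n+1} = {1/x_n}`. -/
noncomputable def gaussIter (α : ℝ) : ℕ → ℝ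
  | 0 => Int.fract α
  | n + 1 => Int.fract (gaussIter α n)⁻¹

/-- `cfa α n` is the partial quotient `a_{n+1} = ⌊1/x_n⌋` of the continued fraction of `α`. -/
noncomputable def cfa (α : ℝ) (n : ℕ) : ℕ := ⌊(gaussIter α n)⁻¹⌋₊

/-- Denominators `q_n` of the continued fraction convergents of `α`:
`q₀ = 1`, `q₁ = a₁`, `q_{n+2} = a_{n+2} q_{n+1} + q_n`. -/
noncomputable def cfq (α : ℝ) : ℕ → ℕ
  | 0 => 1
  | 1 => cfa α 0
  | n + 2 => cfa α (n + 1) * cfq α (n + 1) + cfq α n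

/-- Numerators `p_n` of the continued fraction convergents of `α`:
`p₀ = ⌊α⌋`, `p₁ = a₁⌊α⌋ + 1`, `p_{n+2} = a_{n+2} p_{n+1} + p_n`. -/
noncomputable def cfp (α : ℝ) : ℕ → ℤ
  | 0 => ⌊α⌋
  | 1 => cfa α 0 * ⌊α⌋ + 1
  | n + 2 => cfa α (n + 1) * cfp α (n + 1) + cfp α n

/-- `z_n = q_n α - p_n`. -/
noncomputable def cfz (α : ℝ) (n : ℕ) : ℝ := (cfq α n : ℝ) * α - (cfp α n : ℝ)

/-- The arc `[c, d) (mod 1)` on the circle `ℝ/ℤ`. -/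
noncomputable def arc (c d : ℝ) : Set (AddCircle (1 : ℝ)) :=
  (fun t : ℝ => (t : AddCircle (1 : ℝ))) '' Set.Ico c d

lemma coe_eq_coe' (a b : ℝ) : (a : AddCircle (1:ℝ)) = b ↔ ∃ k : ℤ, b = a + k := by
  constructor
  · intro h
    have h2 := QuotientAddGroup.eq_iff_sub_mem.mp h.symm
    rw [AddSubgroup.mem_zmultiples_iff] at h2
    obtain ⟨k, hk⟩ := h2
    refine ⟨k, ?_⟩
    rw [zsmul_eq_mul, mul_one] at hk
    linarith
  · rintro ⟨k, rfl⟩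
    symm
    rw [QuotientAddGroup.eq_iff_sub_mem, AddSubgroup.mem_zmultiples_iff]
    exact ⟨k, by rw [zsmul_eq_mul, mul_one]; ring⟩
example (x : ℝ) (h : Irrational x) : Irrational x⁻¹ := h.inv

lemma gauss_irr {α : ℝ} (hα : Irrational α) : ∀ n, Irrational (gaussIter α n)
  | 0 => by have := hα.sub_intCast ⌊α⌋; rwa [gaussIter, Int.fract]
  | (n+1) => by
      have := ((gauss_irr hα n).inv).sub_intCast ⌊(gaussIter α n)⁻¹⌋
      rwa [gaussIter, Int.fract]

lemma gauss_pos {α : ℝ} (hα : Irrational α) (n : ℕ) :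
    0 < gaussIter α n ∧ gaussIter α n < 1 := by
  have hirr := gauss_irr hα n
  have h0 : gaussIter α n = Int.fract (match n with
    | 0 => α
    | (m+1) => (gaussIter α m)⁻¹) := by cases n <;> rfl
  refine ⟨?_, by rw [h0]; exact Int.fract_lt_one _⟩
  rcases lt_or_eq_of_le (show (0:ℝ) ≤ gaussIter α n by rw [h0]; exact Int.fract_nonneg _) with h | h
  · exact h
  · exact absurd h.symm (by simpa using hirr.ne_int 0)

lemma one_le_cfa {α : ℝ} (hα : Irrational α) (n : ℕ) : 1 ≤ cfa α n := by
  obtain ⟨h0, h1⟩ := gauss_pos hα n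
  have : 1 ≤ (gaussIter α n)⁻¹ := one_le_inv_iff₀.mpr ⟨h0, le_of_lt h1⟩
  exact Nat.le_floor (by exact_mod_cast this)

lemma cfq_pos {α : ℝ} (hα : Irrational α) : ∀ n, 0 < cfq α n
  | 0 => one_pos
  | 1 => one_le_cfa hα 0
  | (n+2) => by
      have h1 := cfq_pos hα (n+1)
      have h2 := one_le_cfa hα (n+1)
      show 0 < cfa α (n + 1) * cfq α (n + 1) + cfq α n
      positivity

lemma cfq_mono {α : ℝ} (hα : Irrational α) : ∀ n, cfq α n ≤ cfq α (n+1)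
  | 0 => one_le_cfa hα 0
  | (n+1) => by
      show cfq α (n+1) ≤ cfa α (n + 1) * cfq α (n + 1) + cfq α n
      nlinarith [one_le_cfa hα (n+1), cfq_pos hα (n+1)]
lemma cfa_cast {α : ℝ} (hα : Irrational α) (n : ℕ) :
    (cfa α n : ℝ) = (⌊(gaussIter α n)⁻¹⌋ : ℝ) := by
  have h0 : (0:ℤ) ≤ ⌊(gaussIter α n)⁻¹⌋ :=
    Int.floor_nonneg.mpr (le_of_lt (inv_pos.mpr (gauss_pos hα n).1))
  rw [cfa, ← Int.floor_toNat]
  exact_mod_cast congrArg (Int.cast (R := ℝ)) (Int.toNat_of_nonneg h0)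

lemma fract_inv_eq {α : ℝ} (hα : Irrational α) (n : ℕ) :
    gaussIter α (n+1) = (gaussIter α n)⁻¹ - (cfa α n : ℝ) := by
  rw [show gaussIter α (n+1) = Int.fract (gaussIter α n)⁻¹ from rfl, Int.fract, cfa_cast hα]

open Finset in
lemma cfz_eq {α : ℝ} (hα : Irrational α) :
    ∀ n, cfz α n = (-1)^n * ∏ k ∈ range (n+1), gaussIter α k
  | 0 => by
      rw [cfz, show cfq α 0 = 1 from rfl, show cfp α 0 = ⌊α⌋ from rfl, prod_range_one,
        show gaussIter α 0 = α - ⌊α⌋ from rfl]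
      push_cast; ring
  | 1 => by
      have h0 : gaussIter α 0 ≠ 0 := (gauss_pos hα 0).1.ne'
      have hx : gaussIter α 1 = (gaussIter α 0)⁻¹ - (cfa α 0 : ℝ) := fract_inv_eq hα 0
      have hg0 : gaussIter α 0 = α - ⌊α⌋ := rfl
      have hgoal : cfz α 1 = (cfa α 0 : ℝ) * α - ((cfa α 0 : ℝ) * (⌊α⌋:ℝ) + 1) := by
        rw [cfz, show cfq α 1 = cfa α 0 from rfl,
          show cfp α 1 = (cfa α 0 : ℤ) * ⌊α⌋ + 1 from rfl]
        push_cast; ring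
      rw [hg0] at h0 hx
      rw [hgoal, prod_range_succ, prod_range_one, hg0, hx]
      rw [pow_one, mul_sub, mul_inv_cancel₀ h0]
      ring
  | (n+2) => by
      have ih1 := cfz_eq hα (n+1)
      have ih0 := cfz_eq hα n
      have hrec : cfz α (n+2) = (cfa α (n+1) : ℝ) * cfz α (n+1) + cfz α n := by
        rw [cfz, cfz, cfz, show cfq α (n+2) = cfa α (n+1) * cfq α (n+1) + cfq α n from rfl,
          show cfp α (n+2) = (cfa α (n+1) : ℤ) * cfp α (n+1) + cfp α n from rfl]
        push_cast; ring
      have hne : gaussIter α (n+1) ≠ 0 := (gauss_pos hα (n+1)).1.ne'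
      have hx : gaussIter α (n+2) = (gaussIter α (n+1))⁻¹ - (cfa α (n+1) : ℝ) :=
        fract_inv_eq hα (n+1)
      rw [hrec, ih1, ih0, prod_range_succ (n := n+2), prod_range_succ (n := n+1), hx]
      field_simp
      ring
open Finset in
lemma prodx_pos {α : ℝ} (hα : Irrational α) (n : ℕ) :
    0 < ∏ k ∈ range (n+1), gaussIter α k :=
  Finset.prod_pos (fun k _ => (gauss_pos hα k).1)

open Finset in
lemma prodx_lt_one {α : ℝ} (hα : Irrational α) (n : ℕ) :
    ∏ k ∈ range (n+2), gaussIter α k < ∏ k ∈ range (n+1), gaussIter α k := by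
  rw [prod_range_succ (n := n+1)]
  nlinarith [prodx_pos hα n, (gauss_pos hα (n+1)).1, (gauss_pos hα (n+1)).2]

lemma cfz_pos_even {α : ℝ} (hα : Irrational α) {n : ℕ} (hn : Even n) :
    0 < cfz α n ∧ cfz α (n+1) < 0 ∧ |cfz α (n+1)| < |cfz α n| ∧
      |cfz α n| = cfz α n ∧ |cfz α (n+1)| = -cfz α (n+1) := by
  have h1 := cfz_eq hα n
  have h2 := cfz_eq hα (n+1)
  rw [hn.neg_one_pow] at h1
  rw [Odd.neg_one_pow (Even.add_one hn)] at h2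
  have p1 := prodx_pos hα n
  have p2 := prodx_pos hα (n+1)
  have hlt := prodx_lt_one hα n
  have hz1 : 0 < cfz α n := by rw [h1]; linarith
  have hz2 : cfz α (n+1) < 0 := by rw [h2]; linarith
  refine ⟨hz1, hz2, ?_, abs_of_pos hz1, abs_of_neg hz2⟩
  rw [abs_of_pos hz1, abs_of_neg hz2, h1, h2]
  linarith

lemma cf_det {α : ℝ} : ∀ n : ℕ,
    cfp α (n+1) * (cfq α n : ℤ) - cfp α n * (cfq α (n+1) : ℤ) = (-1)^n
  | 0 => by
      rw [show cfp α 1 = (cfa α 0 : ℤ) * ⌊α⌋ + 1 from rfl, show cfp α 0 = ⌊α⌋ from rfl,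
        show cfq α 0 = 1 from rfl, show cfq α 1 = cfa α 0 from rfl]
      push_cast; ring
  | (n+1) => by
      have ih := cf_det (α := α) n
      rw [show cfp α (n+2) = (cfa α (n+1) : ℤ) * cfp α (n+1) + cfp α n from rfl,
        show cfq α (n+2) = cfa α (n+1) * cfq α (n+1) + cfq α n from rfl]
      push_cast
      push_cast at ih
      linear_combination (-1 : ℤ) * ih
lemma cf_key {α : ℝ} (hα : Irrational α) {n : ℕ} (hn : Even n) {j : ℕ} (hj0 : 0 < j)
    (hj : j < cfq α (n+1)) {p : ℤ}
    (h : |(j:ℝ) * α - p| < |cfz α n| + |cfz α (n+1)|) :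
    j = cfq α n ∧ (j:ℝ) * α - p = cfz α n := by
  obtain ⟨hz1, hz2, hzlt, habs1, habs2⟩ := cfz_pos_even hα hn
  have hdet := cf_det (α := α) n
  set u : ℤ := (-1)^n * (cfp α (n+1) * j - (cfq α (n+1) : ℤ) * p) with hu
  set v : ℤ := (-1)^n * ((cfq α n : ℤ) * p - cfp α n * j) with hv
  have hsq : ((-1:ℤ)^n) * ((-1:ℤ)^n) = 1 := by
    rw [← pow_add, Even.neg_one_pow]; exact (hn.add hn)
  have hjq : u * (cfq α n : ℤ) + v * (cfq α (n+1) : ℤ) = j := by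
    rw [hu, hv]; linear_combination ((-1:ℤ)^n * j) * hdet + (j:ℤ) * hsq
  have hjp : u * cfp α n + v * cfp α (n+1) = p := by
    rw [hu, hv]; linear_combination ((-1:ℤ)^n * p) * hdet + p * hsq
  have hreal : (j:ℝ) * α - p = (u:ℝ) * cfz α n + (v:ℝ) * cfz α (n+1) := by
    have c1 : ((u * (cfq α n : ℤ) + v * (cfq α (n+1) : ℤ) : ℤ) : ℝ) = (j:ℝ) := by
      rw [hjq]; push_cast; ring
    have c2 : ((u * cfp α n + v * cfp α (n+1) : ℤ) : ℝ) = (p:ℝ) := by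
      rw [hjp]
    push_cast at c1 c2
    rw [cfz, cfz]
    linear_combination (-α) * c1 + c2
  have hq1 : (1:ℤ) ≤ (cfq α n : ℤ) := by exact_mod_cast cfq_pos hα n
  have hq2 : (1:ℤ) ≤ (cfq α (n+1) : ℤ) := by exact_mod_cast cfq_pos hα (n+1)
  have hj1 : (1:ℤ) ≤ (j:ℤ) := by exact_mod_cast hj0
  have hjz : (j:ℤ) < (cfq α (n+1) : ℤ) := by exact_mod_cast hj
  have habs : |cfz α n| + |cfz α (n+1)| = cfz α n - cfz α (n+1) := by
    rw [habs1, habs2]; ring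
  rw [habs] at h
  have hle1 : (j:ℝ) * α - p ≤ |(j:ℝ) * α - p| := le_abs_self _
  have hle2 : -((j:ℝ) * α - p) ≤ |(j:ℝ) * α - p| := neg_le_abs _
  rcases lt_trichotomy v 0 with hvneg | hv0 | hvpos
  · have hv1 : v ≤ -1 := by omega
    rcases le_or_gt u 0 with hu0 | hupos
    · exfalso; nlinarith [hjq]
    · exfalso
      have hu1 : (1:ℝ) ≤ (u:ℝ) := by exact_mod_cast hupos
      have hv1' : (v:ℝ) ≤ -1 := by exact_mod_cast hv1
      nlinarith [hreal]
  · have hju : (j:ℤ) = u * cfq α n := by rw [← hjq, hv0]; ring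
    have hu1 : 1 ≤ u := by nlinarith
    have hu2 : u ≤ 1 := by
      by_contra hc
      push_neg at hc
      have hu2' : (2:ℝ) ≤ (u:ℝ) := by exact_mod_cast hc
      have : (j:ℝ) * α - p = (u:ℝ) * cfz α n := by
        rw [hreal, hv0]; push_cast; ring
      nlinarith
    have hu : u = 1 := le_antisymm hu2 hu1
    constructor
    · have : (j:ℤ) = (cfq α n : ℤ) := by rw [hju, hu]; ring
      exact_mod_cast this
    · rw [hreal, hu, hv0]; push_cast; ring
  · have hv1 : 1 ≤ v := hvpos
    rcases le_or_gt 0 u with hu0 | huneg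
    · exfalso; nlinarith [hjq]
    · exfalso
      have huneg' : u ≤ -1 := by omega
      have hu1 : (u:ℝ) ≤ -1 := by exact_mod_cast huneg'
      have hv1' : (1:ℝ) ≤ (v:ℝ) := by exact_mod_cast hv1
      nlinarith [hreal]

/-- First forward return times to `I_n = [0, |z_n| + |z_{n+1}|)` for even `n`:
the return time is `q_n` on `I_n⁰ = [0, |z_{n+1}|)` and `q_{n+1}` on `I_n \ I_n⁰`. -/
theorem statement12 (α : ℝ) (hα : Irrational α) (n : ℕ) (hn : Even n)
    (x : ℝ) (hx0 : 0 ≤ x) (hx1 : x < |cfz α n| + |cfz α (n + 1)|) :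
    (x < |cfz α (n + 1)| →
      IsLeast {j : ℕ | 0 < j ∧
        ((x + (j : ℝ) * α : ℝ) : AddCircle (1 : ℝ)) ∈ arc 0 (|cfz α n| + |cfz α (n + 1)|)}
        (cfq α n)) ∧
    (|cfz α (n + 1)| ≤ x →
      IsLeast {j : ℕ | 0 < j ∧
        ((x + (j : ℝ) * α : ℝ) : AddCircle (1 : ℝ)) ∈ arc 0 (|cfz α n| + |cfz α (n + 1)|)}
        (cfq α (n + 1))) := by

  obtain ⟨hz1, hz2, hzlt, habs1, habs2⟩ := cfz_pos_even hα hn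
  have hL : |cfz α n| + |cfz α (n+1)| = cfz α n - cfz α (n+1) := by rw [habs1, habs2]; ring
  constructor
  · intro hx
    constructor
    · refine ⟨cfq_pos hα n, ⟨x + cfz α n, ⟨by linarith, by rw [hL]; linarith⟩, ?_⟩⟩
      exact (coe_eq_coe' _ _).mpr ⟨cfp α n, by rw [cfz]; push_cast; ring⟩
    · rintro j ⟨hj0, hmem⟩
      by_contra hlt
      push_neg at hlt
      obtain ⟨t, ⟨ht0, htL⟩, hteq⟩ := hmem
      obtain ⟨k, hk⟩ := (coe_eq_coe' _ _).mp hteq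
      have hlt' : j < cfq α (n+1) := lt_of_lt_of_le hlt (cfq_mono hα n)
      have habs : |(j:ℝ) * α - k| < |cfz α n| + |cfz α (n+1)| := by
        rw [abs_lt]
        constructor <;> [nlinarith; nlinarith]
      exact absurd ((cf_key hα hn hj0 hlt' habs).1) (Nat.ne_of_lt hlt)
  · intro hx
    constructor
    · refine ⟨cfq_pos hα (n+1), ⟨x + cfz α (n+1), ⟨by linarith, by rw [hL]; linarith⟩, ?_⟩⟩
      exact (coe_eq_coe' _ _).mpr ⟨cfp α (n+1), by rw [cfz]; push_cast; ring⟩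
    · rintro j ⟨hj0, hmem⟩
      by_contra hlt
      push_neg at hlt
      obtain ⟨t, ⟨ht0, htL⟩, hteq⟩ := hmem
      obtain ⟨k, hk⟩ := (coe_eq_coe' _ _).mp hteq
      have habs : |(j:ℝ) * α - k| < |cfz α n| + |cfz α (n+1)| := by
        rw [abs_lt]
        constructor <;> [nlinarith; nlinarith]
      have hkey := cf_key hα hn hj0 hlt habs
      have ht : t = x + cfz α n := by nlinarith [hkey.2]
      rw [hL] at htL
      linarith
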